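/- Let A ∈ ℝ^{N×N} be symmetric positive semidefinite, let Z ∈ ℝ^{N×m₀} satisfy A Z = 0 and Zᵀ Z = I, and let Q ∈ ℝ^{N×s} satisfy Qᵀ Q = I, Qᵀ Z = 0, and (column span of Q) ∩ (nullspace of A) = {0}. Then the nullspace of the (s+m₀)×(s+m₀) matrix [Q, Z]ᵀ A [Q, Z] has dimension exactly m₀. -/

import Mathlib

open Matrix

/-- Assumption 1 realized: if `Z` spans an orthonormal piece of the nullspace of
a PSD matrix `A`, `Q` has orthonormal columns orthogonal to `Z` whose span meets
the nullspace of `A` trivially, then the nullspace of `[Q,Z]ᵀ A [Q,Z]` has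
dimension exactly `m₀`. -/
theorem projected_nullspace_dimension {N s m₀ : ℕ}
    (A : Matrix (Fin N) (Fin N) ℝ) (hA : A.PosSemidef)
    (Z : Matrix (Fin N) (Fin m₀) ℝ) (hAZ : A * Z = 0) (hZ : Zᵀ * Z = 1)
    (Q : Matrix (Fin N) (Fin s) ℝ) (hQ : Qᵀ * Q = 1) (hQZ : Qᵀ * Z = 0)
    (hinter : ∀ x : Fin s → ℝ, A.mulVec (Q.mulVec x) = 0 → Q.mulVec x = 0) :
    Module.finrank ℝ
      (LinearMap.ker
        ((Matrix.fromCols Q Z)ᵀ * A * Matrix.fromCols Q Z).mulVecLin) = m₀ := by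
  set B := Matrix.fromCols Q Z with hB
  have key : LinearMap.ker (Bᵀ * A * B).mulVecLin
      = LinearMap.ker (LinearMap.funLeft ℝ ℝ (Sum.inl : Fin s → Fin s ⊕ Fin m₀)) := by
    ext v
    have hvsplit : v = Sum.elim (v ∘ Sum.inl) (v ∘ Sum.inr) := by
      ext (i | i) <;> rfl
    have hBv : B *ᵥ v = Q *ᵥ (v ∘ Sum.inl) + Z *ᵥ (v ∘ Sum.inr) := by
      conv_lhs => rw [hvsplit]
      rw [hB, fromCols_mulVec_sumElim]
    have hAZv : A *ᵥ (Z *ᵥ (v ∘ Sum.inr)) = 0 := by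
      rw [mulVec_mulVec, hAZ, zero_mulVec]
    simp only [LinearMap.mem_ker, mulVecLin_apply, LinearMap.funLeft_apply]
    constructor
    · intro hv
      have hdot : (B *ᵥ v) ⬝ᵥ (A *ᵥ (B *ᵥ v)) = 0 := by
        have : v ⬝ᵥ ((Bᵀ * A * B) *ᵥ v) = 0 := by rw [hv, dotProduct_zero]
        rwa [← mulVec_mulVec, ← mulVec_mulVec, dotProduct_mulVec,
          vecMul_transpose] at this
      have hzero : A *ᵥ (B *ᵥ v) = 0 :=
        (hA.dotProduct_mulVec_zero_iff (B *ᵥ v)).mp (by simpa using hdot)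
      have hAQ : A *ᵥ (Q *ᵥ (v ∘ Sum.inl)) = 0 := by
        rw [hBv, mulVec_add, hAZv, add_zero] at hzero
        exact hzero
      have hQx : Q *ᵥ (v ∘ Sum.inl) = 0 := hinter _ hAQ
      have : (v ∘ Sum.inl) = 0 := by
        have h1 : Qᵀ *ᵥ (Q *ᵥ (v ∘ Sum.inl)) = 0 := by rw [hQx, mulVec_zero]
        rwa [mulVec_mulVec, hQ, one_mulVec] at h1
      exact this
    · intro hv
      have hBv0 : B *ᵥ v = Z *ᵥ (v ∘ Sum.inr) := by
        have hv' : v ∘ Sum.inl = 0 := hv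
        rw [hBv, hv', mulVec_zero, zero_add]
      rw [← mulVec_mulVec, ← mulVec_mulVec, hBv0, hAZv, mulVec_zero]
  rw [key]
  have hsurj : Function.Surjective
      (LinearMap.funLeft ℝ ℝ (Sum.inl : Fin s → Fin s ⊕ Fin m₀)) :=
    LinearMap.funLeft_surjective_of_injective ℝ ℝ _ Sum.inl_injective
  have hrn := LinearMap.finrank_range_add_finrank_ker
      (LinearMap.funLeft ℝ ℝ (Sum.inl : Fin s → Fin s ⊕ Fin m₀))
  rw [LinearMap.range_eq_top.mpr hsurj] at hrn
  simp [Module.finrank_pi] at hrn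
  omega
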